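/- Let K be a field and let I_1,…,I_r be equigenerated monomial ideals of height 2 in K[x,y]. Then μ(I_1 ⋯ I_r) ≥ Σ_{j=1}^r μ(I_j) − (r − 1), and equality holds if and only if either r = 1, or r > 1 and there exist positive integers a and s_1,…,s_r such that I_j = (x^a, y^a)^{s_j} for j = 1,…,r. -/

import Mathlib

open MvPolynomial

/-- The minimal number of generators of an ideal. -/
noncomputable def mu {R : Type*} [CommRing R] (I : Ideal R) : ℕ :=
  sInf {m : ℕ | ∃ s : Finset R, s.card = m ∧ Ideal.span (s : Set R) = I}

/-- An equigenerated monomial ideal: generated by monomials all of the same total degree. -/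
def IsEquigenMonomialIdeal {K : Type*} [Field K] {n : ℕ}
    (I : Ideal (MvPolynomial (Fin n) K)) : Prop :=
  ∃ (d : ℕ) (S : Set (Fin n →₀ ℕ)), S.Nonempty ∧ (∀ v ∈ S, (∑ i, v i) = d) ∧
    I = Ideal.span ((fun v => monomial v (1 : K)) '' S)

/-- A monomial ideal of `K[x,y]` has height 2 iff it is proper and contains a power of `x`
and a power of `y`. -/
def HasHeightTwo {K : Type*} [Field K] (I : Ideal (MvPolynomial (Fin 2) K)) : Prop :=
  I ≠ ⊤ ∧ ∃ k l : ℕ, 0 < k ∧ 0 < l ∧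
    (X 0 : MvPolynomial (Fin 2) K) ^ k ∈ I ∧ (X 1 : MvPolynomial (Fin 2) K) ^ l ∈ I

namespace Corollary33

open Finset Pointwise

/-- Full arithmetic progression `{0, a, …, s*a}`. -/
def AP (a s : ℕ) : Finset ℕ := (Finset.range (s+1)).image (· * a)

lemma mem_AP {a s x : ℕ} : x ∈ AP a s ↔ ∃ i ≤ s, i * a = x := by
  simp [AP, Nat.lt_succ_iff]

lemma AP_card {a : ℕ} (ha : 0 < a) (s : ℕ) : (AP a s).card = s + 1 := by
  rw [AP, Finset.card_image_of_injective _ (fun i j h => by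
    exact Nat.eq_of_mul_eq_mul_right ha h), Finset.card_range]

lemma AP_zero (a : ℕ) : AP a 0 = {0} := by
  ext x; simp [mem_AP, eq_comm]

lemma zero_mem_AP (a s : ℕ) : 0 ∈ AP a s := mem_AP.2 ⟨0, Nat.zero_le _, by simp⟩

lemma top_mem_AP (a s : ℕ) : s * a ∈ AP a s := mem_AP.2 ⟨s, le_rfl, rfl⟩

lemma AP_bdd {a s x : ℕ} (hx : x ∈ AP a s) : x ≤ s * a := by
  obtain ⟨i, hi, rfl⟩ := mem_AP.1 hx
  exact Nat.mul_le_mul_right a hi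

lemma AP_add_AP (a s t : ℕ) : AP a s + AP a t = AP a (s + t) := by
  ext x
  simp only [Finset.mem_add, mem_AP]
  constructor
  · rintro ⟨y, ⟨i, hi, rfl⟩, z, ⟨j, hj, rfl⟩, rfl⟩
    exact ⟨i + j, by omega, by ring⟩
  · rintro ⟨k, hk, rfl⟩
    refine ⟨(min k s) * a, ⟨min k s, by omega, rfl⟩, (k - min k s) * a,
      ⟨k - min k s, by omega, rfl⟩, by rw [← Nat.add_mul]; congr 1; omega⟩

lemma AP_inj {a g s t : ℕ} (ha : 0 < a) (hg : 0 < g) (hs : 0 < s) (ht : 0 < t)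
    (h : AP a s = AP g t) : a = g ∧ s = t := by
  have hst : s = t := by
    have := AP_card ha s; rw [h, AP_card hg] at this; omega
  subst hst
  have h1 : a ∈ AP g s := by rw [← h]; exact mem_AP.2 ⟨1, hs, by omega⟩
  have h2 : g ∈ AP a s := by rw [h]; exact mem_AP.2 ⟨1, hs, by omega⟩
  obtain ⟨i, _, hi⟩ := mem_AP.1 h1
  obtain ⟨j, _, hj⟩ := mem_AP.1 h2
  have hga : g ≤ a := by
    have hi0 : i ≠ 0 := by rintro rfl; simp at hi; omega
    calc g = 1 * g := (one_mul g).symm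
      _ ≤ i * g := Nat.mul_le_mul_right g (by omega)
      _ = a := hi
  have hag : a ≤ g := by
    have hj0 : j ≠ 0 := by rintro rfl; simp at hj; omega
    calc a = 1 * a := (one_mul a).symm
      _ ≤ j * a := Nat.mul_le_mul_right a (by omega)
      _ = g := hj
  exact ⟨le_antisymm hag hga, rfl⟩

/-- Two-set sumset lower bound. -/
lemma two_ineq {A B : Finset ℕ} {dA dB : ℕ}
    (hdA : dA ∈ A) (hbA : ∀ x ∈ A, x ≤ dA)
    (h0B : 0 ∈ B) (hdB : dB ∈ B) :
    A.card + B.card ≤ (A + B).card + 1 := by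
  have hsub : A ∪ B.image (dA + ·) ⊆ A + B := by
    intro x hx
    rcases Finset.mem_union.1 hx with h | h
    · simpa using Finset.add_mem_add h h0B
    · obtain ⟨b, hb, rfl⟩ := Finset.mem_image.1 h
      exact Finset.add_mem_add hdA hb
  have hinter : A ∩ B.image (dA + ·) ⊆ {dA} := by
    intro x hx
    rw [Finset.mem_inter] at hx
    obtain ⟨b, hb, rfl⟩ := Finset.mem_image.1 hx.2
    have := hbA _ hx.1
    simp only [Finset.mem_singleton]; omega
  have h1 := Finset.card_union_add_card_inter A (B.image (dA + ·))
  have h2 : (B.image (dA + ·)).card = B.card :=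
    Finset.card_image_of_injective _ (fun i j h => by omega)
  have h3 := Finset.card_le_card hsub
  have h4 := Finset.card_le_card hinter
  simp only [Finset.card_singleton] at h4
  omega

/-- Two-set equality characterization. -/
lemma two_eq {A B : Finset ℕ} {dA dB : ℕ}
    (h0A : 0 ∈ A) (hdA : dA ∈ A) (hbA : ∀ x ∈ A, x ≤ dA) (hdA0 : 0 < dA)
    (h0B : 0 ∈ B) (hdB : dB ∈ B) (hbB : ∀ x ∈ B, x ≤ dB) (hdB0 : 0 < dB)
    (heq : (A + B).card + 1 = A.card + B.card) :
    ∃ g, 0 < g ∧ g ∣ dA ∧ g ∣ dB ∧ A = AP g (dA / g) ∧ B = AP g (dB / g) := by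
  have key : ∀ (C D : Finset ℕ) (dC dD : ℕ), dC ∈ C → (∀ x ∈ C, x ≤ dC) →
      0 ∈ D → (C + D).card + 1 = C.card + D.card →
      C + D = C ∪ D.image (dC + ·) := by
    intro C D dC dD hdC hbC h0D hE
    have hsub : C ∪ D.image (dC + ·) ⊆ C + D := by
      intro x hx
      rcases Finset.mem_union.1 hx with h | h
      · simpa using Finset.add_mem_add h h0D
      · obtain ⟨b, hb, rfl⟩ := Finset.mem_image.1 h
        exact Finset.add_mem_add hdC hb
    have hinter : C ∩ D.image (dC + ·) ⊆ {dC} := by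
      intro x hx
      rw [Finset.mem_inter] at hx
      obtain ⟨b, hb, rfl⟩ := Finset.mem_image.1 hx.2
      have := hbC _ hx.1
      simp only [Finset.mem_singleton]; omega
    have h1 := Finset.card_union_add_card_inter C (D.image (dC + ·))
    have h2 : (D.image (dC + ·)).card = D.card :=
      Finset.card_image_of_injective _ (fun i j h => by omega)
    have h4 := Finset.card_le_card hinter
    simp only [Finset.card_singleton] at h4
    symm
    apply Finset.eq_of_subset_of_card_le hsub
    omega
  have E1 : A + B = A ∪ B.image (dA + ·) := key A B dA dB hdA hbA h0B heq
  have E2 : A + B = B ∪ A.image (dB + ·) := by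
    rw [add_comm A B] at heq ⊢
    exact key B A dB dA hdB hbB h0A (by omega)
  have hAf : (A.filter (0 < ·)).Nonempty := ⟨dA, Finset.mem_filter.2 ⟨hdA, hdA0⟩⟩
  have hBf : (B.filter (0 < ·)).Nonempty := ⟨dB, Finset.mem_filter.2 ⟨hdB, hdB0⟩⟩
  set α := (A.filter (0 < ·)).min' hAf with hα
  set β := (B.filter (0 < ·)).min' hBf with hβ
  have hαA : α ∈ A ∧ 0 < α := by
    have := (A.filter (0 < ·)).min'_mem hAf
    rw [Finset.mem_filter] at this; exact this
  have hβB : β ∈ B ∧ 0 < β := by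
    have := (B.filter (0 < ·)).min'_mem hBf
    rw [Finset.mem_filter] at this; exact this
  have closA : ∀ a ∈ A, a ≠ dA → a + β ∈ A := by
    intro a ha hne
    have hmem : a + β ∈ A + B := Finset.add_mem_add ha hβB.1
    rw [E1] at hmem
    rcases Finset.mem_union.1 hmem with h | h
    · exact h
    · obtain ⟨b, hb, hab⟩ := Finset.mem_image.1 h
      rcases Nat.eq_zero_or_pos b with rfl | hbpos
      · have : a + β = dA := by omega
        rwa [this]
      · have hβb : β ≤ b := Finset.min'_le _ _ (Finset.mem_filter.2 ⟨hb, hbpos⟩)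
        have := hbA a ha
        omega
  have closB : ∀ b ∈ B, b ≠ dB → b + α ∈ B := by
    intro b hb hne
    have hmem : b + α ∈ A + B := by
      rw [add_comm b α]; exact Finset.add_mem_add hαA.1 hb
    rw [E2] at hmem
    rcases Finset.mem_union.1 hmem with h | h
    · exact h
    · obtain ⟨a, ha, hab⟩ := Finset.mem_image.1 h
      rcases Nat.eq_zero_or_pos a with rfl | hapos
      · have : b + α = dB := by omega
        rwa [this]
      · have hαa : α ≤ a := Finset.min'_le _ _ (Finset.mem_filter.2 ⟨ha, hapos⟩)
        have := hbB b hb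
        omega
  have hβA : β ∈ A := by simpa using closA 0 h0A (by omega)
  have hαB : α ∈ B := by simpa using closB 0 h0B (by omega)
  have hαβ : α = β := le_antisymm
    (Finset.min'_le _ _ (Finset.mem_filter.2 ⟨hβA, hβB.2⟩))
    (Finset.min'_le _ _ (Finset.mem_filter.2 ⟨hαB, hαA.2⟩))
  set g := α with hgdef
  have hg : 0 < g := hαA.2
  rw [← hαβ] at closA
  clear_value α β
  have mult : ∀ (C : Finset ℕ) (dC : ℕ), 0 ∈ C → dC ∈ C →
      (∀ c ∈ C, c ≠ dC → c + g ∈ C) → ∀ k, k * g ≤ dC → k * g ∈ C := by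
    intro C dC h0C hdC hcl k
    induction k with
    | zero => intro _; simpa using h0C
    | succ n ih =>
      intro hk
      have hexp : (n + 1) * g = n * g + g := by ring
      have hn : n * g ≤ dC := by omega
      have hnC := ih hn
      rcases eq_or_ne (n * g) dC with h | h
      · exfalso; omega
      · have := hcl _ hnC h
        rwa [hexp]
  have multA := mult A dA h0A hdA closA
  have multB := mult B dB h0B hdB closB
  have dvd : ∀ (C : Finset ℕ) (dC : ℕ), (∀ k, k * g ≤ dC → k * g ∈ C) →
      (∀ x ∈ C, x ≤ dC) → (∀ c ∈ C, c ≠ dC → c + g ∈ C) → g ∣ dC := by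
    intro C dC hm hb hcl
    by_contra hnd
    have h1 : (dC / g) * g ≤ dC := Nat.div_mul_le_self dC g
    have h2 := hm _ h1
    have h3 : (dC / g) * g ≠ dC := by
      intro h; exact hnd ⟨dC / g, by rw [mul_comm]; exact h.symm⟩
    have h5 := hcl _ h2 h3
    have h6 := hb _ h5
    have h7 : dC / g * g + dC % g = dC := by
      rw [mul_comm]; exact Nat.div_add_mod dC g
    have h8 : dC % g < g := Nat.mod_lt dC hg
    omega
  have dvdA : g ∣ dA := dvd A dA multA hbA closA
  have dvdB : g ∣ dB := dvd B dB multB hbB closB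
  have exact : ∀ (C : Finset ℕ) (dC : ℕ), (∀ x ∈ C, x ≤ dC) →
      (∀ c ∈ C, c ≠ dC → c + g ∈ C) → g ∣ dC → ∀ c ∈ C, g ∣ c := by
    intro C dC hb hcl hdvd c hc
    by_contra hnd
    have grow : ∀ k, c + k * g ∈ C := by
      intro k
      induction k with
      | zero => simpa using hc
      | succ n ih =>
        have hne : c + n * g ≠ dC := by
          intro h
          apply hnd
          have h2 : g ∣ c + n * g := h ▸ hdvd
          have h3 : g ∣ n * g := dvd_mul_left g n
          exact (Nat.dvd_add_right h3).1 (by rwa [add_comm] at h2)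
        have := hcl _ ih hne
        have heq2 : c + n * g + g = c + (n+1) * g := by ring
        rwa [heq2] at this
    have hle := hb _ (grow (dC + 1))
    have : (dC + 1) * g ≥ dC + 1 := Nat.le_mul_of_pos_right _ hg
    omega
  have exactA := exact A dA hbA closA dvdA
  have exactB := exact B dB hbB closB dvdB
  have final : ∀ (C : Finset ℕ) (dC : ℕ), (∀ x ∈ C, x ≤ dC) →
      (∀ k, k * g ≤ dC → k * g ∈ C) → (∀ c ∈ C, g ∣ c) → g ∣ dC →
      C = AP g (dC / g) := by
    intro C dC hb hm hex hdvd
    ext x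
    rw [mem_AP]
    constructor
    · intro hx
      obtain ⟨i, rfl⟩ := hex x hx
      refine ⟨i, ?_, mul_comm i g⟩
      obtain ⟨j, hj⟩ := hdvd
      have hb2 : g * i ≤ g * j := hj ▸ hb _ hx
      rw [hj, Nat.mul_div_cancel_left _ hg]
      exact Nat.le_of_mul_le_mul_left hb2 hg
    · rintro ⟨i, hi, rfl⟩
      apply hm
      calc i * g ≤ (dC / g) * g := Nat.mul_le_mul_right g hi
        _ ≤ dC := Nat.div_mul_le_self dC g
  exact ⟨g, hg, dvdA, dvdB, final A dA hbA multA exactA dvdA,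
    final B dB hbB multB exactB dvdB⟩

lemma sum_AP : ∀ {r : ℕ} (s : Fin r → ℕ) (a : ℕ),
    ∑ j, AP a (s j) = AP a (∑ j, s j) := by
  intro r
  induction r with
  | zero => intro s a; simp only [Finset.univ_eq_empty, Finset.sum_empty, AP_zero,
      Finset.singleton_zero]
  | succ n ih =>
    intro s a
    rw [Fin.sum_univ_succ, Fin.sum_univ_succ, ih (fun j => s j.succ), AP_add_AP]

lemma sum_props : ∀ {r : ℕ} (A : Fin r → Finset ℕ) (d : Fin r → ℕ),
    (∀ j, 0 ∈ A j) → (∀ j, d j ∈ A j) → (∀ j, ∀ x ∈ A j, x ≤ d j) →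
    0 ∈ ∑ j, A j ∧ (∑ j, d j) ∈ ∑ j, A j ∧ ∀ x ∈ ∑ j, A j, x ≤ ∑ j, d j := by
  intro r
  induction r with
  | zero => intro A d _ _ _; refine ⟨by simp, by simp, by simp⟩
  | succ n ih =>
    intro A d h0 hd hb
    obtain ⟨ih0, ihd, ihb⟩ := ih (fun j => A j.succ) (fun j => d j.succ)
      (fun j => h0 _) (fun j => hd _) (fun j => hb _)
    rw [Fin.sum_univ_succ A, Fin.sum_univ_succ d]
    refine ⟨by simpa using Finset.add_mem_add (h0 0) ih0,
      Finset.add_mem_add (hd 0) ihd, ?_⟩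
    intro x hx
    rw [Finset.mem_add] at hx
    obtain ⟨y, hy, z, hz, rfl⟩ := hx
    exact Nat.add_le_add (hb 0 y hy) (ihb z hz)

lemma main_ineq : ∀ {r : ℕ} (A : Fin r → Finset ℕ) (d : Fin r → ℕ),
    (∀ j, 0 ∈ A j) → (∀ j, d j ∈ A j) → (∀ j, ∀ x ∈ A j, x ≤ d j) →
    ∑ j, (A j).card + 1 ≤ (∑ j, A j).card + r := by
  intro r
  induction r with
  | zero => intro A d _ _ _; simp
  | succ n ih =>
    intro A d h0 hd hb
    have ihh : ∑ j : Fin n, (A j.succ).card + 1 ≤ (∑ j : Fin n, A j.succ).card + n :=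
      ih (fun j => A j.succ) (fun j => d j.succ)
      (fun j => h0 _) (fun j => hd _) (fun j => hb _)
    obtain ⟨t0, td, tb⟩ := sum_props (fun j => A j.succ) (fun j => d j.succ)
      (fun j => h0 _) (fun j => hd _) (fun j => hb _)
    have hpi := two_ineq (hd 0) (hb 0) t0 td
    rw [Fin.sum_univ_succ A, Fin.sum_univ_succ (fun j => (A j).card)]
    omega

lemma main_eq_forward : ∀ {n : ℕ} (A : Fin (n+1) → Finset ℕ) (d : Fin (n+1) → ℕ),
    (∀ j, 0 ∈ A j) → (∀ j, d j ∈ A j) → (∀ j, ∀ x ∈ A j, x ≤ d j) → (∀ j, 0 < d j) →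
    ((∑ j, A j).card + (n+1) = ∑ j, (A j).card + 1) →
    n = 0 ∨ ∃ g, 0 < g ∧ ∀ j, g ∣ d j ∧ A j = AP g (d j / g) := by
  intro n
  induction n with
  | zero => intro _ _ _ _ _ _ _; exact Or.inl rfl
  | succ m ih =>
    intro A d h0 hd hb hdpos heq
    right
    obtain ⟨t0, td, tb⟩ := sum_props (fun j => A j.succ) (fun j => d j.succ)
      (fun j => h0 _) (fun j => hd _) (fun j => hb _)
    have htd0 : 0 < ∑ j : Fin (m+1), d j.succ :=
      lt_of_lt_of_le (hdpos (Fin.succ 0))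
        (Finset.single_le_sum (f := fun j : Fin (m+1) => d j.succ)
          (fun i _ => Nat.zero_le _) (Finset.mem_univ 0))
    have hti : ∑ j : Fin (m+1), (A j.succ).card + 1 ≤ (∑ j : Fin (m+1), A j.succ).card + (m+1) :=
      main_ineq (fun j => A j.succ) (fun j => d j.succ)
      (fun j => h0 _) (fun j => hd _) (fun j => hb _)
    have hpi := two_ineq (hd 0) (hb 0) t0 td
    rw [Fin.sum_univ_succ A, Fin.sum_univ_succ (fun j => (A j).card)] at heq
    have hpe : (A 0 + ∑ j : Fin (m+1), A j.succ).card + 1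
        = (A 0).card + (∑ j : Fin (m+1), A j.succ).card := by omega
    have hte : (∑ j : Fin (m+1), A j.succ).card + (m+1)
        = ∑ j : Fin (m+1), (A j.succ).card + 1 := by omega
    obtain ⟨g, hg, hgd0, hgdT, hA0, hTAP⟩ :=
      two_eq (h0 0) (hd 0) (hb 0) (hdpos 0) t0 td tb htd0 hpe
    rcases ih (fun j => A j.succ) (fun j => d j.succ)
      (fun j => h0 _) (fun j => hd _) (fun j => hb _) (fun j => hdpos _) hte with
      h1 | ⟨a, ha, hAP⟩
    · -- m = 0 : only two ideals
      subst h1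
      refine ⟨g, hg, fun j => ?_⟩
      induction j using Fin.cases with
      | zero => exact ⟨hgd0, hA0⟩
      | succ i =>
        have hi : i = 0 := Subsingleton.elim i 0
        subst hi
        rw [Fin.sum_univ_one] at hTAP hgdT
        exact ⟨hgdT, hTAP⟩
    · -- tail is a family of APs with common difference a
      have hTsum : (∑ j : Fin (m+1), A j.succ) = AP a (∑ j : Fin (m+1), d j.succ / a) := by
        rw [Finset.sum_congr rfl (fun j _ => (hAP j).2)]
        exact sum_AP _ a
      have hsum_pos : 0 < ∑ j : Fin (m+1), d j.succ / a :=
        lt_of_lt_of_le (Nat.div_pos (Nat.le_of_dvd (hdpos _) (hAP 0).1) ha)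
          (Finset.single_le_sum (f := fun j : Fin (m+1) => d j.succ / a)
            (fun i _ => Nat.zero_le _) (Finset.mem_univ 0))
      have hdT_pos : 0 < (∑ j : Fin (m+1), d j.succ) / g :=
        Nat.div_pos (Nat.le_of_dvd htd0 hgdT) hg
      have := AP_inj ha hg hsum_pos hdT_pos (hTsum ▸ hTAP)
      obtain ⟨rfl, -⟩ := this
      refine ⟨a, ha, fun j => ?_⟩
      induction j using Fin.cases with
      | zero => exact ⟨hgd0, hA0⟩
      | succ i => exact hAP i

lemma main_eq_backward {r : ℕ} (A : Fin r → Finset ℕ) (d : Fin r → ℕ) (g : ℕ) (hg : 0 < g)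
    (h : ∀ j, g ∣ d j ∧ A j = AP g (d j / g)) :
    (∑ j, A j).card + r = ∑ j, (A j).card + 1 := by
  have h1 : ∑ j, A j = AP g (∑ j, d j / g) := by
    rw [Finset.sum_congr rfl (fun j _ => (h j).2)]
    exact sum_AP _ g
  have h2 : ∀ j : Fin r, (A j).card = d j / g + 1 := fun j => by
    rw [(h j).2, AP_card hg]
  rw [h1, AP_card hg, Finset.sum_congr rfl (fun j _ => h2 j), Finset.sum_add_distrib,
    Finset.sum_const, Finset.card_univ, Fintype.card_fin, smul_eq_mul, mul_one]
  omega

variable {K : Type*} [Field K]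

/-- The exponent vector `(a, d-a)`. -/
noncomputable def vec (d a : ℕ) : Fin 2 →₀ ℕ := Finsupp.single 0 a + Finsupp.single 1 (d - a)

@[simp] lemma vec_apply0 (d a : ℕ) : vec d a 0 = a := by
  simp [vec, Finsupp.single_apply]

@[simp] lemma vec_apply1 (d a : ℕ) : vec d a 1 = d - a := by
  simp [vec, Finsupp.single_apply]

lemma vec_inj {d a b : ℕ} (h : vec d a = vec d b) : a = b := by
  have := DFunLike.congr_fun h 0
  simpa using this

lemma vec_eq_of_deg {d : ℕ} {v : Fin 2 →₀ ℕ} (h : v 0 + v 1 = d) : vec d (v 0) = v := by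
  ext i
  fin_cases i
  · simp
  · simp; omega

lemma vec_deg {d a : ℕ} (ha : a ≤ d) : vec d a 0 + vec d a 1 = d := by simp; omega

lemma vec_add_vec {d e a b : ℕ} (ha : a ≤ d) (hb : b ≤ e) :
    vec d a + vec e b = vec (d + e) (a + b) := by
  ext i
  fin_cases i
  · simp
  · simp; omega

/-- The monomial ideal with exponents `{(a, d-a) : a ∈ A}`. -/
noncomputable def Jid (d : ℕ) (A : Finset ℕ) : Ideal (MvPolynomial (Fin 2) K) :=
  Ideal.span ((fun a => monomial (vec d a) (1 : K)) '' ↑A)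

lemma Jid_eq_span (d : ℕ) (A : Finset ℕ) :
    (Jid d A : Ideal (MvPolynomial (Fin 2) K)) =
      Ideal.span ((fun v => monomial v (1 : K)) '' (vec d '' ↑A)) := by
  rw [Jid, Set.image_image]

lemma mem_Jid {d : ℕ} {A : Finset ℕ} {f : MvPolynomial (Fin 2) K} :
    f ∈ (Jid d A : Ideal (MvPolynomial (Fin 2) K)) ↔
      ∀ u ∈ f.support, ∃ a ∈ A, vec d a ≤ u := by
  rw [Jid_eq_span, mem_ideal_span_monomial_image]
  constructor
  · intro h u hu
    obtain ⟨v, hv, hle⟩ := h u hu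
    obtain ⟨a, ha, rfl⟩ := hv
    exact ⟨a, ha, hle⟩
  · intro h u hu
    obtain ⟨a, ha, hle⟩ := h u hu
    exact ⟨vec d a, ⟨a, ha, rfl⟩, hle⟩

lemma monomial_mem_Jid {d : ℕ} {A : Finset ℕ} {u : Fin 2 →₀ ℕ} :
    (monomial u (1 : K)) ∈ (Jid d A : Ideal (MvPolynomial (Fin 2) K)) ↔
      ∃ a ∈ A, vec d a ≤ u := by
  classical
  rw [mem_Jid, support_monomial]
  simp [one_ne_zero]

/-- Elements of `Jid d A` are supported in degrees `≥ d`. -/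
lemma support_deg_ge {d : ℕ} {A : Finset ℕ} (hA : ∀ a ∈ A, a ≤ d)
    {f : MvPolynomial (Fin 2) K} (hf : f ∈ (Jid d A : Ideal (MvPolynomial (Fin 2) K)))
    {u : Fin 2 →₀ ℕ} (hu : u ∈ f.support) : d ≤ u 0 + u 1 := by
  obtain ⟨a, ha, hle⟩ := mem_Jid.1 hf u hu
  have h0 := hle 0
  have h1 := hle 1
  simp only [vec_apply0, vec_apply1] at h0 h1
  have := hA a ha
  omega

/-- uniqueness of the presentation -/
lemma Jid_inj {d e : ℕ} {A B : Finset ℕ} (hAne : A.Nonempty) (hBne : B.Nonempty)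
    (hA : ∀ a ∈ A, a ≤ d) (hB : ∀ b ∈ B, b ≤ e)
    (h : (Jid d A : Ideal (MvPolynomial (Fin 2) K)) = Jid e B) : d = e ∧ A = B := by
  have hde : ∀ (d' e' : ℕ) (A' B' : Finset ℕ), A'.Nonempty → (∀ a ∈ A', a ≤ d') →
      (∀ b ∈ B', b ≤ e') →
      (Jid d' A' : Ideal (MvPolynomial (Fin 2) K)) = Jid e' B' → e' ≤ d' := by
    intro d' e' A' B' hne hA' hB' hh
    obtain ⟨a, ha⟩ := hne
    have hmem : (monomial (vec d' a) (1:K)) ∈ (Jid d' A' : Ideal (MvPolynomial (Fin 2) K)) :=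
      monomial_mem_Jid.2 ⟨a, ha, le_rfl⟩
    rw [hh] at hmem
    obtain ⟨b, hb, hle⟩ := monomial_mem_Jid.1 hmem
    have h0 := hle 0
    have h1 := hle 1
    simp only [vec_apply0, vec_apply1] at h0 h1
    have := hA' a ha
    have := hB' b hb
    omega
  have hd : d = e := le_antisymm (hde e d B A hBne hB hA h.symm) (hde d e A B hAne hA hB h)
  subst hd
  refine ⟨rfl, ?_⟩
  have hsub : ∀ (A' B' : Finset ℕ), (∀ a ∈ A', a ≤ d) → (∀ b ∈ B', b ≤ d) →
      (Jid d A' : Ideal (MvPolynomial (Fin 2) K)) = Jid d B' → A' ⊆ B' := by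
    intro A' B' hA' hB' hh a ha
    have hmem : (monomial (vec d a) (1:K)) ∈ (Jid d A' : Ideal (MvPolynomial (Fin 2) K)) :=
      monomial_mem_Jid.2 ⟨a, ha, le_rfl⟩
    rw [hh] at hmem
    obtain ⟨b, hb, hle⟩ := monomial_mem_Jid.1 hmem
    have h0 := hle 0
    have h1 := hle 1
    simp only [vec_apply0, vec_apply1] at h0 h1
    have := hA' a ha
    have := hB' b hb
    have : b = a := by omega
    rwa [← this]
  exact Finset.Subset.antisymm (hsub A B hA hB h) (hsub B A hB hA h.symm)

lemma coeff_mul_of_mem {d : ℕ} {A : Finset ℕ} (hA : ∀ a ∈ A, a ≤ d)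
    {g : MvPolynomial (Fin 2) K} (hg : g ∈ (Jid d A : Ideal (MvPolynomial (Fin 2) K)))
    {u : Fin 2 →₀ ℕ} (hu : u 0 + u 1 = d) (c : MvPolynomial (Fin 2) K) :
    coeff u (c * g) = coeff 0 c * coeff u g := by
  classical
  rw [coeff_mul]
  rw [Finset.sum_eq_single ((0 : Fin 2 →₀ ℕ), u)]
  · rintro ⟨p, q⟩ hpq hne
    rw [Finset.HasAntidiagonal.mem_antidiagonal] at hpq
    by_cases hq : coeff q g = 0
    · rw [hq, mul_zero]
    · exfalso
      have hqs : q ∈ g.support := mem_support_iff.2 hq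
      have hdq := support_deg_ge hA hg hqs
      have h0 := DFunLike.congr_fun hpq 0
      have h1 := DFunLike.congr_fun hpq 1
      simp only [Finsupp.add_apply] at h0 h1
      have hp0 : p 0 = 0 := by omega
      have hp1 : p 1 = 0 := by omega
      have hp : p = 0 := by
        ext i; fin_cases i
        · exact hp0
        · exact hp1
      apply hne
      rw [hp]
      rw [hp] at hpq
      rw [Prod.mk.injEq]
      exact ⟨rfl, by rw [← hpq, zero_add]⟩
  · intro h
    exact absurd (Finset.HasAntidiagonal.mem_antidiagonal.2 (zero_add u)) h

lemma mu_Jid {d : ℕ} {A : Finset ℕ} (hne : A.Nonempty) (hA : ∀ a ∈ A, a ≤ d) :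
    mu (Jid d A : Ideal (MvPolynomial (Fin 2) K)) = A.card := by
  classical
  have hwitness : Ideal.span ((A.image (fun a => monomial (vec d a) (1:K))) :
      Set (MvPolynomial (Fin 2) K)) = Jid d A := by
    rw [Finset.coe_image]; rfl
  have hcard : (A.image (fun a => monomial (vec d a) (1:K))).card = A.card :=
    Finset.card_image_of_injective _
      (fun a b hab => vec_inj (monomial_left_injective one_ne_zero hab))
  apply le_antisymm
  · exact Nat.sInf_le ⟨_, hcard, hwitness⟩
  · refine le_csInf ⟨A.card, A.image (fun a => monomial (vec d a) (1:K)), hcard, hwitness⟩ ?_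
    rintro m ⟨s, rfl, hspan⟩
    set Φ : MvPolynomial (Fin 2) K →ₗ[K] (↥A → K) :=
      LinearMap.pi (fun x => lcoeff K (vec d (x:ℕ))) with hΦ
    have hsmem : ∀ f ∈ s, f ∈ (Jid d A : Ideal (MvPolynomial (Fin 2) K)) := fun f hf => by
      rw [← hspan]; exact Ideal.subset_span hf
    have claim1 : ∀ f ∈ (Jid d A : Ideal (MvPolynomial (Fin 2) K)),
        Φ f ∈ Submodule.span K (Φ '' ↑s) := by
      intro f hf
      have hf' : f ∈ Submodule.span (MvPolynomial (Fin 2) K)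
          (↑s : Set (MvPolynomial (Fin 2) K)) := by
        rw [Ideal.submodule_span_eq, hspan]; exact hf
      obtain ⟨c, -, hc⟩ := Submodule.mem_span_finset.1 hf'
      have hΦf : Φ f = ∑ i ∈ s, coeff 0 (c i) • Φ i := by
        funext x
        have hx : coeff (vec d (x:ℕ)) f = ∑ i ∈ s, coeff 0 (c i) * coeff (vec d (x:ℕ)) i := by
          rw [← hc, coeff_sum]
          refine Finset.sum_congr rfl (fun i hi => ?_)
          rw [smul_eq_mul]
          exact coeff_mul_of_mem hA (hsmem i hi) (vec_deg (hA x x.2)) (c i)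
        simpa [hΦ, Finset.sum_apply] using hx
      rw [hΦf]
      exact Submodule.sum_mem _ (fun i hi =>
        Submodule.smul_mem _ _ (Submodule.subset_span ⟨i, hi, rfl⟩))
    have claim2 : ∀ x : ↥A, Pi.single x (1:K) ∈ Submodule.span K (Φ '' ↑s) := by
      intro x
      have hmono : (monomial (vec d (x:ℕ)) (1:K)) ∈ (Jid d A : Ideal (MvPolynomial (Fin 2) K)) :=
        monomial_mem_Jid.2 ⟨x, x.2, le_rfl⟩
      have hmem := claim1 _ hmono
      have hPhi : Φ (monomial (vec d (x:ℕ)) (1:K)) = Pi.single x 1 := by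
        funext y
        simp only [hΦ, LinearMap.pi_apply, lcoeff_apply, coeff_monomial]
        rw [Pi.single_apply]
        by_cases h : y = x
        · subst h; simp
        · rw [if_neg (fun hvec => h (Subtype.ext (vec_inj hvec.symm))), if_neg h]
      rwa [hPhi] at hmem
    have htop : Submodule.span K (Φ '' ↑s) = ⊤ := by
      rw [eq_top_iff]
      intro v _
      have hv : v = ∑ x : ↥A, v x • (Pi.single x (1:K) : ↥A → K) := by
        funext j
        rw [Finset.sum_apply]
        simp [Pi.single_apply]
      rw [hv]
      exact Submodule.sum_mem _ (fun x _ => Submodule.smul_mem _ _ (claim2 x))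
    have h1 : Submodule.span K (↑(s.image Φ) : Set (↥A → K)) = ⊤ := by
      rw [Finset.coe_image]; exact htop
    have h2 := finrank_span_finset_le_card (R := K) (s.image Φ)
    unfold Set.finrank at h2
    rw [h1, finrank_top] at h2
    have h3 : Module.finrank K (↥A → K) = A.card := by
      rw [Module.finrank_fintype_fun_eq_card, Fintype.card_coe]
    have h4 := Finset.card_image_le (f := Φ) (s := s)
    omega

lemma vec_zero_zero : vec 0 0 = 0 := by
  ext i; fin_cases i <;> simp

lemma Jid_one : (Jid 0 {0} : Ideal (MvPolynomial (Fin 2) K)) = 1 := by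
  have himg : ((fun a => monomial (vec 0 a) (1:K)) '' ↑({0} : Finset ℕ)) = {1} := by
    rw [Finset.coe_singleton, Set.image_singleton, vec_zero_zero, monomial_zero', C_1]
  rw [Jid, himg, Ideal.span_singleton_one, Ideal.one_eq_top]

lemma Jid_mul {d e : ℕ} {A B : Finset ℕ} (hA : ∀ a ∈ A, a ≤ d) (hB : ∀ b ∈ B, b ≤ e) :
    (Jid d A : Ideal (MvPolynomial (Fin 2) K)) * Jid e B = Jid (d+e) (A + B) := by
  rw [Jid, Jid, Jid, Ideal.span_mul_span']
  congr 1
  ext f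
  constructor
  · intro hf
    rw [Set.mem_mul] at hf
    obtain ⟨p, hp, q, hq, rfl⟩ := hf
    obtain ⟨a, ha, rfl⟩ := hp
    obtain ⟨b, hb, rfl⟩ := hq
    refine ⟨a + b, ?_, ?_⟩
    · rw [Finset.mem_coe] at *
      exact_mod_cast Finset.add_mem_add ha hb
    · rw [monomial_mul, vec_add_vec (hA a ha) (hB b hb), one_mul]
  · rintro ⟨x, hx, rfl⟩
    rw [Finset.mem_coe, Finset.mem_add] at hx
    obtain ⟨a, ha, b, hb, rfl⟩ := hx
    exact Set.mem_mul.2 ⟨monomial (vec d a) 1, ⟨a, ha, rfl⟩, monomial (vec e b) 1, ⟨b, hb, rfl⟩,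
      by rw [monomial_mul, vec_add_vec (hA a ha) (hB b hb), one_mul]⟩

lemma Jid_prod : ∀ {r : ℕ} (A : Fin r → Finset ℕ) (d : Fin r → ℕ),
    (∀ j, 0 ∈ A j) → (∀ j, d j ∈ A j) → (∀ j, ∀ x ∈ A j, x ≤ d j) →
    (∏ j, (Jid (d j) (A j) : Ideal (MvPolynomial (Fin 2) K)))
      = Jid (∑ j, d j) (∑ j, A j) := by
  intro r
  induction r with
  | zero =>
    intro A d _ _ _
    simp only [Finset.univ_eq_empty, Finset.prod_empty, Finset.sum_empty]
    rw [← Finset.singleton_zero, Jid_one]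
  | succ n ih =>
    intro A d h0 hd hb
    obtain ⟨t0, td, tb⟩ := sum_props (fun j => A j.succ) (fun j => d j.succ)
      (fun j => h0 _) (fun j => hd _) (fun j => hb _)
    rw [Fin.prod_univ_succ, Fin.sum_univ_succ A, Fin.sum_univ_succ d,
      ih (fun j => A j.succ) (fun j => d j.succ) (fun j => h0 _) (fun j => hd _) (fun j => hb _),
      Jid_mul (hb 0) tb]

lemma span_xy {a : ℕ} :
    (Ideal.span {X 0 ^ a, X 1 ^ a} : Ideal (MvPolynomial (Fin 2) K)) = Jid a {0, a} := by
  rw [Jid]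
  congr 1
  have hv1 : vec a a = Finsupp.single 0 a := by
    ext i; fin_cases i <;> simp [Finsupp.single_apply]
  have hv2 : vec a 0 = Finsupp.single 1 a := by
    ext i; fin_cases i <;> simp [Finsupp.single_apply]
  have h1 : (X 0 : MvPolynomial (Fin 2) K) ^ a = monomial (vec a a) 1 := by
    rw [X_pow_eq_monomial, hv1]
  have h2 : (X 1 : MvPolynomial (Fin 2) K) ^ a = monomial (vec a 0) 1 := by
    rw [X_pow_eq_monomial, hv2]
  rw [h1, h2, Finset.coe_insert, Finset.coe_singleton, Set.image_insert_eq, Set.image_singleton]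
  exact Set.pair_comm _ _

lemma AP_one {a : ℕ} : AP a 1 = ({0, a} : Finset ℕ) := by
  ext x
  rw [mem_AP]
  simp only [Finset.mem_insert, Finset.mem_singleton]
  constructor
  · rintro ⟨i, hi, rfl⟩
    interval_cases i
    · left; simp
    · right; simp
  · rintro (rfl | rfl)
    · exact ⟨0, by omega, by simp⟩
    · exact ⟨1, le_rfl, by simp⟩

lemma span_xy_pow {a : ℕ} (ha : 0 < a) (s : ℕ) :
    (Ideal.span {X 0 ^ a, X 1 ^ a} : Ideal (MvPolynomial (Fin 2) K)) ^ s
      = Jid (s * a) (AP a s) := by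
  induction s with
  | zero => rw [pow_zero, Nat.zero_mul, AP_zero, Jid_one]
  | succ n ih =>
    rw [pow_succ, ih, span_xy,
      Jid_mul (fun x hx => AP_bdd hx) (fun b hb => by
        simp only [Finset.mem_insert, Finset.mem_singleton] at hb
        rcases hb with rfl | rfl <;> omega)]
    rw [← AP_one, AP_add_AP]
    congr 1
    ring

lemma exists_rep {I : Ideal (MvPolynomial (Fin 2) K)} (h : IsEquigenMonomialIdeal I)
    (hh : HasHeightTwo I) :
    ∃ (d : ℕ) (A : Finset ℕ), (∀ a ∈ A, a ≤ d) ∧ 0 ∈ A ∧ d ∈ A ∧ 0 < d ∧ I = Jid d A := by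
  classical
  obtain ⟨d, S, hSne, hdeg, hspan⟩ := h
  have hdeg' : ∀ v ∈ S, v 0 + v 1 = d := by
    intro v hv; have := hdeg v hv; rwa [Fin.sum_univ_two] at this
  have hfin : S.Finite := by
    apply Set.Finite.subset (Set.Finite.image (vec d) (Set.finite_Iic d))
    intro v hv
    exact ⟨v 0, by simp only [Set.mem_Iic]; have := hdeg' v hv; omega,
      vec_eq_of_deg (hdeg' v hv)⟩
  set A : Finset ℕ := hfin.toFinset.image (fun v => v 0) with hAdef
  have hSA : S = vec d '' ↑A := by
    ext v
    constructor
    · intro hv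
      exact ⟨v 0, by simp [hAdef]; exact ⟨v, hv, rfl⟩, vec_eq_of_deg (hdeg' v hv)⟩
    · rintro ⟨a, ha, rfl⟩
      simp only [hAdef, Finset.coe_image, Set.mem_image, Finset.mem_coe,
        Set.Finite.mem_toFinset] at ha
      obtain ⟨v, hv, rfl⟩ := ha
      rwa [vec_eq_of_deg (hdeg' v hv)]
  have hI : I = Jid d A := by
    rw [hspan, hSA, Jid, Set.image_image]
  have hbd : ∀ a ∈ A, a ≤ d := by
    intro a ha
    simp only [hAdef, Finset.mem_image, Set.Finite.mem_toFinset] at ha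
    obtain ⟨v, hv, rfl⟩ := ha
    have := hdeg' v hv; omega
  obtain ⟨hne, k, l, hk, hl, hxk, hyl⟩ := hh
  rw [hI] at hxk hyl hne
  -- d ∈ A
  have hdA : d ∈ A := by
    rw [X_pow_eq_monomial] at hxk
    obtain ⟨a, ha, hle⟩ := monomial_mem_Jid.1 hxk
    have h1 := hle 1
    simp only [vec_apply1, Finsupp.single_apply] at h1
    have := hbd a ha
    have : a = d := by
      by_cases h01 : (1 : Fin 2) = 0
      · exact absurd h01 (by decide)
      · simp only [if_neg (by decide : ¬ ((0:Fin 2) = 1))] at h1; omega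
    rwa [← this]
  have h0A : 0 ∈ A := by
    rw [X_pow_eq_monomial] at hyl
    obtain ⟨a, ha, hle⟩ := monomial_mem_Jid.1 hyl
    have h0 := hle 0
    simp only [vec_apply0, Finsupp.single_apply] at h0
    have : a = 0 := by
      simp only [if_neg (by decide : ¬ ((1:Fin 2) = 0))] at h0; omega
    rwa [← this]
  have hd0 : 0 < d := by
    rcases Nat.eq_zero_or_pos d with rfl | h
    · exfalso
      apply hne
      have hA0 : A = {0} := by
        apply Finset.Subset.antisymm
        · intro a ha; simp only [Finset.mem_singleton]; have := hbd a ha; omega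
        · intro a ha; simp only [Finset.mem_singleton] at ha; rwa [ha]
      rw [hA0, Jid_one, Ideal.one_eq_top]
    · exact h
  exact ⟨d, A, hbd, h0A, hdA, hd0, hI⟩

theorem main {K : Type*} [Field K] {r : ℕ} (hr : 0 < r)
    (I : Fin r → Ideal (MvPolynomial (Fin 2) K))
    (heq : ∀ j, IsEquigenMonomialIdeal (I j)) (hht : ∀ j, HasHeightTwo (I j)) :
    (∑ j, mu (I j)) - (r - 1) ≤ mu (∏ j, I j) ∧
    (mu (∏ j, I j) = (∑ j, mu (I j)) - (r - 1) ↔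
      r = 1 ∨ (1 < r ∧ ∃ a : ℕ, 0 < a ∧ ∃ s : Fin r → ℕ, ∀ j, 0 < s j ∧
        I j = (Ideal.span {X 0 ^ a, X 1 ^ a} : Ideal (MvPolynomial (Fin 2) K)) ^ (s j))) := by
  classical
  choose d A hbd h0A hdA hd0 hI using fun j => exists_rep (heq j) (hht j)
  have hAne : ∀ j, (A j).Nonempty := fun j => ⟨0, h0A j⟩
  have hmu : ∀ j, mu (I j) = (A j).card := fun j => by
    rw [hI j]; exact mu_Jid (hAne j) (hbd j)
  obtain ⟨s0, sd, sb⟩ := sum_props A d h0A hdA hbd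
  have hprod : (∏ j, I j) = Jid (∑ j, d j) (∑ j, A j) := by
    rw [Finset.prod_congr rfl (fun j _ => hI j)]
    exact Jid_prod A d h0A hdA hbd
  have hmuprod : mu (∏ j, I j) = (∑ j, A j).card := by
    rw [hprod]; exact mu_Jid ⟨0, s0⟩ sb
  have hsum_eq : (∑ j, mu (I j)) = ∑ j, (A j).card :=
    Finset.sum_congr rfl (fun j _ => hmu j)
  have hineq := main_ineq A d h0A hdA hbd
  have hcard2 : ∀ j, 2 ≤ (A j).card := fun j =>
    Finset.one_lt_card.2 ⟨0, h0A j, d j, hdA j, by have := hd0 j; omega⟩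
  have hsum2 : 2 * r ≤ ∑ j, (A j).card := by
    calc 2 * r = ∑ _j : Fin r, 2 := by
          rw [Finset.sum_const, Finset.card_univ, Fintype.card_fin, smul_eq_mul]; ring
      _ ≤ ∑ j, (A j).card := Finset.sum_le_sum (fun j _ => hcard2 j)
  rw [hmuprod, hsum_eq]
  constructor
  · omega
  · have hiff : (∑ j, A j).card = (∑ j, (A j).card) - (r - 1) ↔
        (∑ j, A j).card + r = ∑ j, (A j).card + 1 := by omega
    rw [hiff]
    constructor
    · intro hE
      obtain ⟨n, rfl⟩ : ∃ n, r = n + 1 := ⟨r - 1, by omega⟩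
      rcases main_eq_forward A d h0A hdA hbd hd0 hE with h1 | ⟨g, hg, hgood⟩
      · left; omega
      · rcases Nat.eq_or_lt_of_le (Nat.one_le_iff_ne_zero.2 (Nat.succ_ne_zero n)) with h1 | h1
        · left; omega
        · right
          refine ⟨h1, g, hg, fun j => d j / g, fun j => ?_⟩
          obtain ⟨hdvd, hAP⟩ := hgood j
          refine ⟨Nat.div_pos (Nat.le_of_dvd (hd0 j) hdvd) hg, ?_⟩
          rw [hI j, hAP, span_xy_pow hg]
          congr 1
          exact (Nat.div_mul_cancel hdvd).symm
    · rintro (rfl | ⟨-, a, ha, s, hs⟩)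
      · simp only [Fin.sum_univ_one]
      · have hrep : ∀ j, d j = s j * a ∧ A j = AP a (s j) := by
          intro j
          apply Jid_inj (K := K) (hAne j) ⟨0, zero_mem_AP a (s j)⟩ (hbd j)
            (fun x hx => AP_bdd hx)
          rw [← hI j, (hs j).2, span_xy_pow ha]
        apply main_eq_backward A d a ha
        intro j
        obtain ⟨hd', hA'⟩ := hrep j
        have : a ∣ d j := ⟨s j, by rw [hd']; ring⟩
        refine ⟨this, ?_⟩
        rw [hA', hd', Nat.mul_div_cancel _ ha]

end Corollary33

/-- Corollary 3.3: for equigenerated monomial ideals `I₁,…,I_r ⊂ K[x,y]` of height 2 one has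
`μ(I₁ ⋯ I_r) ≥ Σ μ(I_j) - (r-1)`, with equality iff `r = 1`, or `r > 1` and there are positive
integers `a` and `s₁,…,s_r` with `I_j = (xᵃ,yᵃ)^{s_j}` for all `j`. -/
theorem numGen_prod_ge_and_eq_iff {K : Type*} [Field K] {r : ℕ} (hr : 0 < r)
    (I : Fin r → Ideal (MvPolynomial (Fin 2) K))
    (heq : ∀ j, IsEquigenMonomialIdeal (I j)) (hht : ∀ j, HasHeightTwo (I j)) :
    (∑ j, mu (I j)) - (r - 1) ≤ mu (∏ j, I j) ∧
    (mu (∏ j, I j) = (∑ j, mu (I j)) - (r - 1) ↔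
      r = 1 ∨ (1 < r ∧ ∃ a : ℕ, 0 < a ∧ ∃ s : Fin r → ℕ, ∀ j, 0 < s j ∧
        I j = (Ideal.span {X 0 ^ a, X 1 ^ a} : Ideal (MvPolynomial (Fin 2) K)) ^ (s j))) := by
  exact Corollary33.main hr I heq hht
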